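/- Let B be a symmetric traceless 3×3 matrix, f_B the Bingham distribution, and Q its traceless second moment. Then B·Q = Q·B, i.e., B commutes with Q (equivalently, B commutes with the second moment matrix M = Q + I/3). -/

import Mathlib

open MeasureTheory Matrix
noncomputable section
abbrev E3 := EuclideanSpace ℝ (Fin 3)
/-- Surface measure on the unit sphere in ℝ³. -/
def sphMeasure : Measure E3 := (μH[2]).restrict (Metric.sphere 0 1)
/-- The quadratic form mᵀBm. -/
def quadB (B : Matrix (Fin 3) (Fin 3) ℝ) (m : E3) : ℝ := ∑ i, ∑ j, m i * B i j * m j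
/-- Bingham partition function. -/
def Zb (B : Matrix (Fin 3) (Fin 3) ℝ) : ℝ := ∫ m, Real.exp (quadB B m) ∂sphMeasure
/-- Bingham density on the sphere. -/
def fB (B : Matrix (Fin 3) (Fin 3) ℝ) (m : E3) : ℝ := Real.exp (quadB B m) / Zb B

namespace BinghamAux

/-- The linear isometry equivalence of `E3` given by an orthogonal matrix. -/
def matIso (V : Matrix (Fin 3) (Fin 3) ℝ) (h1 : Vᵀ * V = 1) (h2 : V * Vᵀ = 1) :
    E3 ≃ₗᵢ[ℝ] E3 :=
  LinearEquiv.isometryOfInner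
    (LinearEquiv.ofLinear (Matrix.toEuclideanLin V) (Matrix.toEuclideanLin Vᵀ)
      (by
        apply LinearMap.ext; intro x
        simp [Matrix.toEuclideanLin_apply, Matrix.mulVec_mulVec, h2])
      (by
        apply LinearMap.ext; intro x
        simp [Matrix.toEuclideanLin_apply, Matrix.mulVec_mulVec, h1]))
    (by
      intro x y
      simp only [LinearEquiv.ofLinear_apply, Matrix.toEuclideanLin_apply, PiLp.inner_apply,
        RCLike.inner_apply, conj_trivial]
      show ((V *ᵥ _) ⬝ᵥ (V *ᵥ _) : ℝ) = _ ⬝ᵥ _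
      rw [Matrix.dotProduct_mulVec, ← Matrix.vecMul_transpose, Matrix.vecMul_vecMul, h1,
        Matrix.vecMul_one])

lemma matIso_coord (V : Matrix (Fin 3) (Fin 3) ℝ) (h1 : Vᵀ * V = 1) (h2 : V * Vᵀ = 1)
    (m : E3) (i : Fin 3) : (matIso V h1 h2 m) i = ∑ k, V i k * m k := by
  show (Matrix.toEuclideanLin V m) i = _
  simp [matIso, LinearEquiv.isometryOfInner, Matrix.toEuclideanLin_apply,
    Matrix.mulVec, dotProduct]

end BinghamAux

namespace BinghamAux

variable (V : Matrix (Fin 3) (Fin 3) ℝ) (h1 : Vᵀ * V = 1) (h2 : V * Vᵀ = 1)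

lemma quadB_eq_dot (A : Matrix (Fin 3) (Fin 3) ℝ) (m : E3) :
    quadB A m = (fun j => m j) ⬝ᵥ (A *ᵥ fun j => m j) := by
  simp [quadB, dotProduct, Matrix.mulVec, Finset.mul_sum, mul_assoc]

lemma quadB_matIso (A : Matrix (Fin 3) (Fin 3) ℝ) (m : E3) :
    quadB A (matIso V h1 h2 m) = quadB (Vᵀ * A * V) m := by
  rw [quadB_eq_dot, quadB_eq_dot]
  have hc : (fun j => (matIso V h1 h2 m) j) = V *ᵥ (fun j => m j) := by
    funext j
    rw [matIso_coord]
    simp [Matrix.mulVec, dotProduct]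
  rw [hc, Matrix.mulVec_mulVec, Matrix.dotProduct_mulVec, ← Matrix.vecMul_transpose,
    Matrix.vecMul_vecMul, ← Matrix.dotProduct_mulVec, Matrix.mul_assoc]

/-- The isometry preserves the sphere measure. -/
lemma matIso_measurePreserving :
    MeasurePreserving (matIso V h1 h2) sphMeasure sphMeasure := by
  have hiso : MeasurePreserving ((matIso V h1 h2).toIsometryEquiv) μH[2] μH[2] :=
    (matIso V h1 h2).toIsometryEquiv.measurePreserving_hausdorffMeasure 2
  have hemb : MeasurableEmbedding ((matIso V h1 h2).toIsometryEquiv) :=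
    (matIso V h1 h2).toIsometryEquiv.toHomeomorph.toMeasurableEquiv.measurableEmbedding
  have hpre : ((matIso V h1 h2).toIsometryEquiv) ⁻¹' (Metric.sphere (0:E3) 1)
      = Metric.sphere 0 1 := by
    ext x
    simp only [Set.mem_preimage, mem_sphere_iff_norm, sub_zero, LinearIsometryEquiv.coe_toIsometryEquiv]
    rw [(matIso V h1 h2).norm_map]
  have := hiso.restrict_preimage_emb hemb (Metric.sphere 0 1)
  rw [hpre] at this
  exact this

lemma matIso_measurableEmbedding :
    MeasurableEmbedding (matIso V h1 h2) :=
  (matIso V h1 h2).toIsometryEquiv.toHomeomorph.toMeasurableEquiv.measurableEmbedding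

lemma integral_matIso (g : E3 → ℝ) :
    ∫ m, g (matIso V h1 h2 m) ∂sphMeasure = ∫ m, g m ∂sphMeasure :=
  (matIso_measurePreserving V h1 h2).integral_comp (matIso_measurableEmbedding V h1 h2) g

lemma integrable_matIso (g : E3 → ℝ) :
    Integrable (fun m => g (matIso V h1 h2 m)) sphMeasure ↔ Integrable g sphMeasure :=
  (matIso_measurePreserving V h1 h2).integrable_comp_emb (matIso_measurableEmbedding V h1 h2)

lemma coord_abs_le_norm (m : E3) (k : Fin 3) : |m k| ≤ ‖m‖ := by
  rw [EuclideanSpace.norm_eq]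
  have h1 : |m k| = Real.sqrt (m k ^ 2) := by rw [← Real.sqrt_sq (abs_nonneg (m k)), sq_abs]
  rw [h1]
  apply Real.sqrt_le_sqrt
  have : m k ^ 2 ≤ ∑ i, m i ^ 2 :=
    Finset.single_le_sum (f := fun i => m i ^ 2) (fun i _ => sq_nonneg _) (Finset.mem_univ k)
  simpa [sq_abs] using this

end BinghamAux

namespace BinghamAux

lemma J_off (d : Fin 3 → ℝ) (k l : Fin 3) (hkl : k ≠ l) :
    ∫ n, n k * n l * Real.exp (quadB (Matrix.diagonal d) n) ∂sphMeasure = 0 := by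
  classical
  set r : Fin 3 → ℝ := fun t => if t = k then (-1 : ℝ) else 1 with hr
  set R := Matrix.diagonal r with hRdef
  have hRT : Rᵀ = R := Matrix.diagonal_transpose r
  have hRR : R * R = 1 := by
    rw [hRdef, Matrix.diagonal_mul_diagonal]
    ext i j
    rcases eq_or_ne i j with rfl | hij
    · by_cases h : i = k <;> simp [Matrix.diagonal_apply, Matrix.one_apply, hr, h]
    · simp [Matrix.diagonal_apply, Matrix.one_apply, hij]
  have h1 : Rᵀ * R = 1 := by rw [hRT]; exact hRR
  have h2 : R * Rᵀ = 1 := by rw [hRT]; exact hRR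
  have hDR : Rᵀ * Matrix.diagonal d * R = Matrix.diagonal d := by
    rw [hRT, hRdef, Matrix.diagonal_mul_diagonal, Matrix.diagonal_mul_diagonal]
    ext i j
    rcases eq_or_ne i j with rfl | hij
    · by_cases h : i = k <;> simp [Matrix.diagonal_apply, hr, h] <;> ring
    · simp [Matrix.diagonal_apply, hij]
  have hco : ∀ (m : E3) (t : Fin 3), (matIso R h1 h2 m) t = r t * m t := by
    intro m t
    rw [matIso_coord]
    simp [hRdef, Matrix.diagonal_apply]
  have key := integral_matIso R h1 h2
    (fun m => m k * m l * Real.exp (quadB (Matrix.diagonal d) m))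
  have hneg : (fun n : E3 => (matIso R h1 h2 n) k * (matIso R h1 h2 n) l *
      Real.exp (quadB (Matrix.diagonal d) (matIso R h1 h2 n)))
      = fun n : E3 => -(n k * n l * Real.exp (quadB (Matrix.diagonal d) n)) := by
    funext n
    rw [hco, hco, quadB_matIso, hDR]
    have hrk : r k = -1 := by simp [hr]
    have hrl : r l = 1 := by simp [hr, hkl.symm]
    rw [hrk, hrl]
    ring
  rw [hneg, integral_neg] at key
  linarith

end BinghamAux

open BinghamAux

theorem bingham_B_commutes_Q
    (B : Matrix (Fin 3) (Fin 3) ℝ) (hBs : B.IsSymm) (hBt : B.trace = 0)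
    (Q : Matrix (Fin 3) (Fin 3) ℝ)
    (hQ : ∀ i j, Q i j =
      ∫ m, (m i * m j - if i = j then (1:ℝ)/3 else 0) * fB B m ∂sphMeasure) :
    B * Q = Q * B := by
  classical
  have hB' : B.IsHermitian := by
    rw [Matrix.IsHermitian, Matrix.conjTranspose_eq_transpose_of_trivial]
    exact hBs
  by_cases hint : Integrable (fun m => Real.exp (quadB B m)) sphMeasure
  swap
  · have hz : Zb B = 0 := integral_undef hint
    have hQ0 : Q = 0 := by
      ext i j
      rw [hQ]
      simp [fB, hz]
    rw [hQ0, Matrix.mul_zero, Matrix.zero_mul]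
  set U : Matrix (Fin 3) (Fin 3) ℝ := ↑(hB'.eigenvectorUnitary) with hUdef
  set dg : Fin 3 → ℝ := RCLike.ofReal ∘ hB'.eigenvalues with hdg
  set D : Matrix (Fin 3) (Fin 3) ℝ := Matrix.diagonal dg with hDdef
  have h1 : Uᵀ * U = 1 := by
    have h := Unitary.coe_star_mul_self hB'.eigenvectorUnitary
    rwa [Matrix.star_eq_conjTranspose, Matrix.conjTranspose_eq_transpose_of_trivial] at h
  have h2 : U * Uᵀ = 1 := mul_eq_one_comm.mp h1
  have hspec : Uᵀ * B * U = D := by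
    have h := hB'.conjStarAlgAut_star_eigenvectorUnitary
    simpa only [Unitary.conjStarAlgAut_apply, Unitary.coe_star, star_star,
      Matrix.star_eq_conjTranspose, Matrix.conjTranspose_eq_transpose_of_trivial,
      Matrix.transpose_transpose] using h
  have hBspec : B = U * D * Uᵀ := by
    have h := hB'.spectral_theorem
    rwa [Unitary.conjStarAlgAut_apply, Matrix.star_eq_conjTranspose, Matrix.conjTranspose_eq_transpose_of_trivial] at h
  set φ := matIso U h1 h2 with hφ
  have hquad : ∀ n, quadB B (φ n) = quadB D n := by
    intro n
    rw [hφ, quadB_matIso, hspec]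
  set e : E3 → ℝ := fun n => Real.exp (quadB D n) with he
  have he_int : Integrable e sphMeasure := by
    have h := (integrable_matIso U h1 h2 (fun m => Real.exp (quadB B m))).2 hint
    simp only [← hφ, hquad] at h
    exact h
  set c : ℝ := Zb B with hc
  have hsph_meas : MeasurableSet (Metric.sphere (0:E3) 1) :=
    Metric.isClosed_sphere.measurableSet
  have hnorm : ∀ᵐ m ∂sphMeasure, ‖m‖ = 1 := by
    have h := ae_restrict_mem (μ := μH[2]) hsph_meas
    filter_upwards [h] with m hm
    rwa [mem_sphere_zero_iff_norm] at hm
  have hbdd : ∀ k l : Fin 3, Integrable (fun n : E3 => n k * n l * e n) sphMeasure := by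
    intro k l
    apply Integrable.bdd_mul (c := 1) he_int
    · exact ((EuclideanSpace.proj k).continuous.mul
        (EuclideanSpace.proj l).continuous).aestronglyMeasurable
    · filter_upwards [hnorm] with m hm
      have h1 := coord_abs_le_norm m k
      have h2 := coord_abs_le_norm m l
      rw [hm] at h1 h2
      calc ‖m k * m l‖ = |m k| * |m l| := abs_mul _ _
        _ ≤ 1 * 1 := mul_le_mul h1 h2 (abs_nonneg _) zero_le_one
        _ = 1 := one_mul 1
  have hJoff : ∀ k l : Fin 3, k ≠ l → ∫ n, n k * n l * e n ∂sphMeasure = 0 := by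
    intro k l hkl
    exact J_off dg k l hkl
  have hQval : ∀ i j, Q i j = (∑ k, (U i k * U j k) * ((∫ n, n k * n k * e n ∂sphMeasure) / c))
      - (if i = j then (1:ℝ)/3 else 0) * ((∫ n, e n ∂sphMeasure) / c) := by
    intro i j
    rw [hQ i j,
      ← integral_matIso U h1 h2 (fun m => (m i * m j - if i = j then (1:ℝ)/3 else 0) * fB B m)]
    have hpt : (fun n : E3 => ((φ n) i * (φ n) j - if i = j then (1:ℝ)/3 else 0) * fB B (φ n))
        = fun n : E3 => (∑ k, ∑ l, (U i k * U j l / c) * (n k * n l * e n))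
            - ((if i = j then (1:ℝ)/3 else 0) / c) * e n := by
      funext n
      rw [hφ, matIso_coord, matIso_coord]
      show _ * (Real.exp (quadB B (φ n)) / Zb B) = _
      rw [hquad n]
      simp only [he, hc]
      rw [sub_mul]
      have hs : (∑ k, U i k * n k) * (∑ l, U j l * n l) * (Real.exp (quadB D n) / Zb B)
          = ∑ k, ∑ l, (U i k * U j l / Zb B) * (n k * n l * Real.exp (quadB D n)) := by
        rw [Finset.sum_mul_sum, Finset.sum_mul]
        refine Finset.sum_congr rfl fun k _ => ?_
        rw [Finset.sum_mul]
        refine Finset.sum_congr rfl fun l _ => ?_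
        ring
      rw [hs]
      ring
    rw [hpt, integral_sub
      (integrable_finset_sum _ fun k _ => integrable_finset_sum _ fun l _ => (hbdd k l).const_mul _)
      (he_int.const_mul _)]
    rw [integral_finset_sum _ fun k _ =>
      integrable_finset_sum _ fun l _ => (hbdd k l).const_mul _]
    rw [integral_const_mul]
    congr 1
    · refine Finset.sum_congr rfl fun k _ => ?_
      rw [integral_finset_sum _ fun l _ => (hbdd k l).const_mul _,
        Finset.sum_eq_single k (fun l _ hlk => by
          rw [integral_const_mul, hJoff k l (Ne.symm hlk), mul_zero])
        (fun h => absurd (Finset.mem_univ k) h), integral_const_mul]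
      ring
    · ring
  set zd : ℝ := ∫ n, e n ∂sphMeasure with hzd
  set W : Matrix (Fin 3) (Fin 3) ℝ :=
    Matrix.diagonal (fun k => (∫ n, n k * n k * e n ∂sphMeasure) / c) with hW
  have hQmat : Q = U * W * Uᵀ - (zd / (3 * c)) • 1 := by
    ext i j
    rw [hQval i j, Matrix.sub_apply, Matrix.smul_apply, Matrix.one_apply, Matrix.mul_apply]
    congr 1
    · refine Finset.sum_congr rfl fun k _ => ?_
      rw [hW, Matrix.mul_diagonal, Matrix.transpose_apply]
      ring
    · by_cases hij : i = j <;> simp [hij] <;> ring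
  have hcomm : D * W = W * D := by
    rw [hDdef, hW, Matrix.diagonal_mul_diagonal, Matrix.diagonal_mul_diagonal]
    refine congrArg Matrix.diagonal ?_
    funext t
    ring
  have hsand : ∀ X Y : Matrix (Fin 3) (Fin 3) ℝ, (U*X*Uᵀ) * (U*Y*Uᵀ) = U*(X*Y)*Uᵀ := by
    intro X Y
    have h3 : Uᵀ * (U * Y * Uᵀ) = Y * Uᵀ := by
      rw [← Matrix.mul_assoc, ← Matrix.mul_assoc, h1, Matrix.one_mul]
    rw [Matrix.mul_assoc (U * X) Uᵀ (U * Y * Uᵀ), h3, ← Matrix.mul_assoc,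
      Matrix.mul_assoc U X Y]
  rw [hBspec, hQmat, Matrix.mul_sub, Matrix.sub_mul, Matrix.mul_smul, Matrix.smul_mul,
    Matrix.mul_one, Matrix.one_mul, hsand, hsand, hcomm]
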